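/- The point (x₀, y₀) with x₀ = arccos(1/√3)/π and y₀ = arccos(1/√6)/π is a strict local minimum point of f, and the value of f there equals -4√2/27 ≈ -0.21 (the depth of the shallow wells). -/

import Mathlib

open Real

/-- `f (x, y) = sin (π x) · sin (2 π x) · cos (π y) · cos (2 π y)`. -/
noncomputable def f : ℝ × ℝ → ℝ := fun p =>
  Real.sin (Real.pi * p.1) * Real.sin (2 * Real.pi * p.1) *
    Real.cos (Real.pi * p.2) * Real.cos (2 * Real.pi * p.2)

lemma f_eq (x y : ℝ) : f (x, y) =
    2 * (1 - Real.cos (Real.pi * x) ^ 2) * Real.cos (Real.pi * x) *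
      ((2 * Real.cos (Real.pi * y) ^ 2 - 1) * Real.cos (Real.pi * y)) := by
  have hs : Real.sin (Real.pi * x) ^ 2 = 1 - Real.cos (Real.pi * x) ^ 2 := Real.sin_sq _
  simp only [f]
  rw [show 2 * Real.pi * x = 2 * (Real.pi * x) by ring,
    show 2 * Real.pi * y = 2 * (Real.pi * y) by ring,
    Real.sin_two_mul, Real.cos_two_mul]
  linear_combination (2 * Real.cos (Real.pi * x) *
    ((2 * Real.cos (Real.pi * y) ^ 2 - 1) * Real.cos (Real.pi * y))) * hs

set_option maxHeartbeats 1000000 in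
/-- The point `(arccos (1/√3) / π, arccos (1/√6) / π)` is a strict local minimum
point of `f`, with value `-4 √2 / 27` (the depth of the shallow wells). -/
theorem f_strict_local_min :
    (∀ᶠ q in nhdsWithin
        (Real.arccos (1 / Real.sqrt 3) / Real.pi, Real.arccos (1 / Real.sqrt 6) / Real.pi)
        {(Real.arccos (1 / Real.sqrt 3) / Real.pi, Real.arccos (1 / Real.sqrt 6) / Real.pi)}ᶜ,
      f (Real.arccos (1 / Real.sqrt 3) / Real.pi, Real.arccos (1 / Real.sqrt 6) / Real.pi) < f q) ∧
    f (Real.arccos (1 / Real.sqrt 3) / Real.pi, Real.arccos (1 / Real.sqrt 6) / Real.pi) =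
      -(4 * Real.sqrt 2 / 27) := by
  have hπ : (0:ℝ) < Real.pi := Real.pi_pos
  set a : ℝ := 1 / Real.sqrt 3 with ha_def
  set b : ℝ := 1 / Real.sqrt 6 with hb_def
  have h3 : (0:ℝ) < Real.sqrt 3 := Real.sqrt_pos.2 (by norm_num)
  have h6 : (0:ℝ) < Real.sqrt 6 := Real.sqrt_pos.2 (by norm_num)
  have ha2 : a ^ 2 = 1 / 3 := by
    rw [ha_def, div_pow, one_pow, Real.sq_sqrt (by norm_num : (3:ℝ) ≥ 0)]
  have hb2 : b ^ 2 = 1 / 6 := by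
    rw [hb_def, div_pow, one_pow, Real.sq_sqrt (by norm_num : (6:ℝ) ≥ 0)]
  have ha_pos : 0 < a := by positivity
  have hb_pos : 0 < b := by positivity
  have ha_lt : a < 1 := by
    rw [ha_def, div_lt_one h3]
    nlinarith [Real.sq_sqrt (by norm_num : (3:ℝ) ≥ 0)]
  have hb_lt : b < 1 := by
    rw [hb_def, div_lt_one h6]
    nlinarith [Real.sq_sqrt (by norm_num : (6:ℝ) ≥ 0)]
  set x₀ : ℝ := Real.arccos a / Real.pi with hx₀_def
  set y₀ : ℝ := Real.arccos b / Real.pi with hy₀_def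
  have hπx₀ : Real.pi * x₀ = Real.arccos a := by rw [hx₀_def]; field_simp
  have hπy₀ : Real.pi * y₀ = Real.arccos b := by rw [hy₀_def]; field_simp
  have hcx₀ : Real.cos (Real.pi * x₀) = a := by
    rw [hπx₀]; exact Real.cos_arccos (by linarith) ha_lt.le
  have hcy₀ : Real.cos (Real.pi * y₀) = b := by
    rw [hπy₀]; exact Real.cos_arccos (by linarith) hb_lt.le
  have hx₀mem : x₀ ∈ Set.Ioo (0:ℝ) (1/2) := by
    constructor
    · exact div_pos (Real.arccos_pos.2 ha_lt) hπ
    · rw [hx₀_def, div_lt_iff₀ hπ]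
      have := Real.arccos_lt_pi_div_two.2 ha_pos
      linarith
  have hy₀mem : y₀ ∈ Set.Ioo (0:ℝ) (1/2) := by
    constructor
    · exact div_pos (Real.arccos_pos.2 hb_lt) hπ
    · rw [hy₀_def, div_lt_iff₀ hπ]
      have := Real.arccos_lt_pi_div_two.2 hb_pos
      linarith
  -- value at the point
  have hval : f (x₀, y₀) = -(4 * Real.sqrt 2 / 27) := by
    rw [f_eq, hcx₀, hcy₀]
    have h36 : Real.sqrt 3 * Real.sqrt 6 = 3 * Real.sqrt 2 := by
      rw [← Real.sqrt_mul (by norm_num : (0:ℝ) ≤ 3)]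
      rw [show (3:ℝ) * 6 = 3 ^ 2 * 2 by norm_num,
        Real.sqrt_mul (by positivity), Real.sqrt_sq (by norm_num : (0:ℝ) ≤ 3)]
    have hab : a * b = Real.sqrt 2 / 6 := by
      rw [ha_def, hb_def]
      rw [div_mul_div_comm, one_mul, h36]
      rw [div_eq_div_iff (by positivity) (by norm_num)]
      nlinarith [Real.sq_sqrt (by norm_num : (2:ℝ) ≥ 0), Real.sqrt_nonneg 2]
    have : 2 * (1 - a ^ 2) * a * ((2 * b ^ 2 - 1) * b) = -(8/9) * (a * b) := by
      rw [show 2 * (1 - a^2) * a * ((2 * b^2 - 1) * b)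
          = 2 * (1 - a^2) * (2 * b^2 - 1) * (a * b) by ring, ha2, hb2]
      norm_num
    rw [this, hab]; ring
  refine ⟨?_, hval⟩
  -- the neighborhood
  have hUopen : IsOpen (Set.Ioo (0:ℝ) (1/2) ×ˢ Set.Ioo (0:ℝ) (1/2)) :=
    isOpen_Ioo.prod isOpen_Ioo
  have hU : (Set.Ioo (0:ℝ) (1/2) ×ˢ Set.Ioo (0:ℝ) (1/2)) ∈ nhds ((x₀, y₀) : ℝ × ℝ) :=
    hUopen.mem_nhds ⟨hx₀mem, hy₀mem⟩
  filter_upwards [self_mem_nhdsWithin, mem_nhdsWithin_of_mem_nhds hU] with q hqne hqU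
  simp only [Set.mem_compl_iff, Set.mem_singleton_iff] at hqne
  obtain ⟨hq1, hq2⟩ := hqU
  set c : ℝ := Real.cos (Real.pi * q.1) with hc_def
  set d : ℝ := Real.cos (Real.pi * q.2) with hd_def
  have hπq1 : Real.pi * q.1 ∈ Set.Ioo 0 (Real.pi / 2) := by
    constructor
    · exact mul_pos hπ hq1.1
    · calc Real.pi * q.1 < Real.pi * (1/2) := by
            exact mul_lt_mul_of_pos_left hq1.2 hπ
        _ = Real.pi / 2 := by ring
  have hπq2 : Real.pi * q.2 ∈ Set.Ioo 0 (Real.pi / 2) := by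
    constructor
    · exact mul_pos hπ hq2.1
    · calc Real.pi * q.2 < Real.pi * (1/2) := by
            exact mul_lt_mul_of_pos_left hq2.2 hπ
        _ = Real.pi / 2 := by ring
  have hc_pos : 0 < c := Real.cos_pos_of_mem_Ioo ⟨by linarith [hπq1.1], hπq1.2⟩
  have hd_pos : 0 < d := Real.cos_pos_of_mem_Ioo ⟨by linarith [hπq2.1], hπq2.2⟩
  have hc_lt : c < 1 := by
    have := Real.strictAntiOn_cos (Set.mem_Icc.2 ⟨le_refl 0, by linarith⟩)
      (Set.mem_Icc.2 ⟨(hπq1.1).le, by linarith [hπq1.2]⟩) hπq1.1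
    simpa [Real.cos_zero] using this
  have hd_lt : d < 1 := by
    have := Real.strictAntiOn_cos (Set.mem_Icc.2 ⟨le_refl 0, by linarith⟩)
      (Set.mem_Icc.2 ⟨(hπq2.1).le, by linarith [hπq2.2]⟩) hπq2.1
    simpa [Real.cos_zero] using this
  have hmem1 : Real.pi * q.1 ∈ Set.Icc 0 Real.pi :=
    ⟨hπq1.1.le, by linarith [hπq1.2]⟩
  have hmem2 : Real.pi * q.2 ∈ Set.Icc 0 Real.pi :=
    ⟨hπq2.1.le, by linarith [hπq2.2]⟩
  have hmem1' : Real.pi * x₀ ∈ Set.Icc 0 Real.pi := by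
    rw [hπx₀]; exact ⟨Real.arccos_nonneg a, Real.arccos_le_pi a⟩
  have hmem2' : Real.pi * y₀ ∈ Set.Icc 0 Real.pi := by
    rw [hπy₀]; exact ⟨Real.arccos_nonneg b, Real.arccos_le_pi b⟩
  have hinj : c ≠ a ∨ d ≠ b := by
    by_contra h
    push_neg at h
    apply hqne
    have hcc : Real.cos (Real.pi * q.1) = Real.cos (Real.pi * x₀) := by rw [hcx₀]; exact h.1
    have hdd : Real.cos (Real.pi * q.2) = Real.cos (Real.pi * y₀) := by rw [hcy₀]; exact h.2
    have e1 := Real.injOn_cos hmem1 hmem1' hcc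
    have e2 := Real.injOn_cos hmem2 hmem2' hdd
    exact Prod.ext (mul_left_cancel₀ hπ.ne' e1) (mul_left_cancel₀ hπ.ne' e2)
  have hfq : f q = 2 * (1 - c ^ 2) * c * ((2 * d ^ 2 - 1) * d) := by
    rw [show q = (q.1, q.2) from rfl, f_eq]
  have hfp : f (x₀, y₀) = 2 * (1 - a ^ 2) * a * ((2 * b ^ 2 - 1) * b) := by
    rw [f_eq, hcx₀, hcy₀]
  rw [hfq, hfp]
  -- key decomposition
  have key : 2 * (1 - c ^ 2) * c * ((2 * d ^ 2 - 1) * d)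
      - 2 * (1 - a ^ 2) * a * ((2 * b ^ 2 - 1) * b)
      = 2 * (1 - c ^ 2) * c * (2 * (d - b) ^ 2 * (d + 2 * b))
        + (2 * (c - a) ^ 2 * (c + 2 * a)) * (2 * b / 3) := by
    have h1 : (2 * d ^ 2 - 1) * d - (2 * b ^ 2 - 1) * b = 2 * (d - b) ^ 2 * (d + 2 * b) := by
      linear_combination (6 * (d - b)) * hb2
    have h2 : 2 * (1 - a ^ 2) * a - 2 * (1 - c ^ 2) * c = 2 * (c - a) ^ 2 * (c + 2 * a) := by
      linear_combination (6 * (c - a)) * ha2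
    have h3 : (2 * b ^ 2 - 1) * b = -(2 * b / 3) := by
      linear_combination (2 * b) * hb2
    linear_combination (2 * (1 - c ^ 2) * c) * h1 + (-((2 * b ^ 2 - 1) * b)) * h2
      + (-(2 * (c - a) ^ 2 * (c + 2 * a))) * h3
  have h1c : (0:ℝ) < 1 - c ^ 2 := by
    have h := mul_pos (sub_pos.2 hc_lt) (show (0:ℝ) < 1 + c by linarith)
    calc (0:ℝ) < (1 - c) * (1 + c) := h
      _ = 1 - c ^ 2 := by ring
  have hd2b : (0:ℝ) < d + 2 * b := by linarith
  have hc2a : (0:ℝ) < c + 2 * a := by linarith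
  have t1 : 0 ≤ 2 * (1 - c ^ 2) * c * (2 * (d - b) ^ 2 * (d + 2 * b)) := by
    apply mul_nonneg (by positivity)
    exact mul_nonneg (by positivity) hd2b.le
  have t2 : 0 ≤ (2 * (c - a) ^ 2 * (c + 2 * a)) * (2 * b / 3) := by positivity
  rcases hinj with hca | hdb
  · have h0 : 0 < (c - a) ^ 2 :=
      lt_of_le_of_ne (sq_nonneg _) (Ne.symm (pow_ne_zero 2 (sub_ne_zero.2 hca)))
    have hpos : 0 < (2 * (c - a) ^ 2 * (c + 2 * a)) * (2 * b / 3) :=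
      mul_pos (mul_pos (by linarith) hc2a) (by linarith)
    linarith
  · have h0 : 0 < (d - b) ^ 2 :=
      lt_of_le_of_ne (sq_nonneg _) (Ne.symm (pow_ne_zero 2 (sub_ne_zero.2 hdb)))
    have hpos : 0 < 2 * (1 - c ^ 2) * c * (2 * (d - b) ^ 2 * (d + 2 * b)) :=
      mul_pos (by positivity) (mul_pos (by linarith) hd2b)
    linarith
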